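/- Unstable section at zeros of the off-diagonal sampling function. Let T : Ω → Ω be a bijection, E ∈ ℝ, q : Ω → ℝ, p : Ω → ℂ, and let B^E : Ω → M₂(ℂ) be the Jacobi cocycle B^E(ω) = [[E - q(ω), -conj(p(T⁻¹ω))], [p(ω), 0]]. Suppose (T, B^E) admits a dominated splitting Eˢ, Eᵘ. If ω ∈ Ω satisfies p(ω) = 0, then Eᵘ(Tω) = ℂ·(1,0)ᵀ, the span of the first standard basis vector of ℂ². -/

import Mathlib

/-- Iterates of the cocycle `(T, B)`: `B₀(ω) = I` and
`B_{n+1}(ω) = B(Tⁿω) ⬝ B_n(ω)`. -/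
noncomputable def cocycleIter {Ω : Type*} (T : Ω → Ω) (B : Ω → Matrix (Fin 2) (Fin 2) ℂ) :
    ℕ → Ω → Matrix (Fin 2) (Fin 2) ℂ
  | 0, _ => 1
  | n + 1, ω => B (T^[n] ω) * cocycleIter T B n ω

/-- A dominated splitting for `(T, B)`: two maps `Es, Eu` from `Ω` into the
one-dimensional subspaces of `ℂ²` (with the Euclidean norm) that are invariant
under the cocycle and such that some iterate uniformly expands the unstable
direction relative to the stable one. -/
structure DominatedSplitting {Ω : Type*} (T : Ω → Ω) (B : Ω → Matrix (Fin 2) (Fin 2) ℂ)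
    (Es Eu : Ω → Submodule ℂ (EuclideanSpace ℂ (Fin 2))) : Prop where
  finrank_s : ∀ ω, Module.finrank ℂ (Es ω) = 1
  finrank_u : ∀ ω, Module.finrank ℂ (Eu ω) = 1
  invariant_s : ∀ ω, (Es ω).map (Matrix.toEuclideanLin (B ω)) ≤ Es (T ω)
  invariant_u : ∀ ω, (Eu ω).map (Matrix.toEuclideanLin (B ω)) ≤ Eu (T ω)
  dominates : ∃ (N : ℕ) (ρ : ℝ), 1 < ρ ∧ ∀ ω, ∀ u ∈ Eu ω, ∀ s ∈ Es ω,
    ‖u‖ = 1 → ‖s‖ = 1 →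
      ρ * ‖Matrix.toEuclideanLin (cocycleIter T B N ω) s‖ <
        ‖Matrix.toEuclideanLin (cocycleIter T B N ω) u‖

lemma cocycleIter_succ' {Ω : Type*} (T : Ω → Ω) (B : Ω → Matrix (Fin 2) (Fin 2) ℂ)
    (n : ℕ) (ω : Ω) :
    cocycleIter T B (n + 1) ω = cocycleIter T B n (T ω) * B ω := by
  induction n generalizing ω with
  | zero => simp [cocycleIter]
  | succ m ih =>
      show B (T^[m+1] ω) * cocycleIter T B (m + 1) ω = _
      rw [ih, Function.iterate_succ_apply, ← mul_assoc]
      rfl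

lemma exists_unit_vector {V : Type*} [NormedAddCommGroup V] [NormedSpace ℂ V]
    (W : Submodule ℂ V) (h : Module.finrank ℂ W = 1) :
    ∃ v ∈ W, ‖v‖ = 1 := by
  have hbot : W ≠ ⊥ := by
    intro hb
    rw [hb] at h
    simp at h
  obtain ⟨x, hxW, hx0⟩ := W.exists_mem_ne_zero_of_ne_bot hbot
  refine ⟨((‖x‖ : ℂ)⁻¹) • x, W.smul_mem _ hxW, ?_⟩
  have hn : ‖x‖ ≠ 0 := norm_ne_zero_iff.mpr hx0
  rw [norm_smul]
  simp [hn]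

/-- **Unstable section at zeros of the off-diagonal sampling function.**
For the Jacobi cocycle `B^E(ω) = [[E - q(ω), -conj(p(T⁻¹ω))], [p(ω), 0]]` over a
bijection `T`, if `(T, B^E)` admits a dominated splitting and `p(ω) = 0`, then
`Eᵘ(Tω)` is the span of the first standard basis vector of `ℂ²`. -/
theorem unstable_section_at_zero_of_offdiagonal {Ω : Type*} (T : Ω ≃ Ω)
    (E : ℝ) (q : Ω → ℝ) (p : Ω → ℂ)
    (B : Ω → Matrix (Fin 2) (Fin 2) ℂ)
    (hB : ∀ ω, B ω = !![(E : ℂ) - (q ω : ℂ), -(starRingEnd ℂ) (p (T.symm ω)); p ω, 0])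
    (Es Eu : Ω → Submodule ℂ (EuclideanSpace ℂ (Fin 2)))
    (hDS : DominatedSplitting (⇑T) B Es Eu)
    (ω : Ω) (hp : p ω = 0) :
    Eu (T ω) = Submodule.span ℂ {EuclideanSpace.single (0 : Fin 2) (1 : ℂ)} := by
  obtain ⟨u, huE, hu1⟩ := exists_unit_vector (Eu ω) (hDS.finrank_u ω)
  obtain ⟨s, hsE, hs1⟩ := exists_unit_vector (Es ω) (hDS.finrank_s ω)
  set v : EuclideanSpace ℂ (Fin 2) := Matrix.toEuclideanLin (B ω) u with hv
  -- v is nonzero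
  have hvne : v ≠ 0 := by
    intro hv0
    obtain ⟨N, ρ, hρ, hdom⟩ := hDS.dominates
    have := hdom ω u huE s hsE hu1 hs1
    match N with
    | 0 =>
        have hid : ∀ x : EuclideanSpace ℂ (Fin 2),
            Matrix.toEuclideanLin (cocycleIter (⇑T) B 0 ω) x = x := by
          intro x
          show Matrix.toEuclideanLin (1 : Matrix (Fin 2) (Fin 2) ℂ) x = x
          rw [Matrix.toEuclideanLin_apply, Matrix.one_mulVec]
        rw [hid u, hid s, hu1, hs1, mul_one] at this
        exact absurd this (not_lt.mpr hρ.le)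
    | Nat.succ m =>
        rw [cocycleIter_succ' (⇑T) B m ω] at this
        have hmul : Matrix.toEuclideanLin (cocycleIter (⇑T) B m (T ω) * B ω) u
            = Matrix.toEuclideanLin (cocycleIter (⇑T) B m (T ω)) v := by
          rw [hv, Matrix.toEuclideanLin_apply, Matrix.toEuclideanLin_apply,
            Matrix.toEuclideanLin_apply]
          simp only [WithLp.ofLp_toLp, Matrix.mulVec_mulVec]
        rw [hmul, hv0, map_zero, norm_zero] at this
        exact absurd this (not_lt.mpr (mul_nonneg (by linarith) (norm_nonneg _)))
  -- v ∈ Eu (T ω)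
  have hvmem : v ∈ Eu (T ω) :=
    hDS.invariant_u ω ⟨u, huE, rfl⟩
  -- second coordinate of v is zero
  have hv1 : v 1 = 0 := by
    have : v 1 = ((B ω).mulVec (WithLp.equiv 2 (Fin 2 → ℂ) u)) 1 := rfl
    rw [this, hB ω]
    simp [Matrix.mulVec, dotProduct, Fin.sum_univ_two, hp]
  -- hence v = (v 0) • e0
  have hveq : v = (v 0) • EuclideanSpace.single (0 : Fin 2) (1 : ℂ) := by
    ext i
    fin_cases i
    · simp [PiLp.smul_apply, EuclideanSpace.single_apply]
    · simpa [PiLp.smul_apply, EuclideanSpace.single_apply] using hv1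
  have hv0ne : v 0 ≠ 0 := by
    intro h0
    apply hvne
    rw [hveq, h0, zero_smul]
  -- span v = span e0
  have hspan : Submodule.span ℂ {EuclideanSpace.single (0 : Fin 2) (1 : ℂ)}
      = Submodule.span ℂ {v} := by
    rw [hveq]
    exact (Submodule.span_singleton_smul_eq (Ne.isUnit hv0ne) _).symm
  -- conclude by dimension
  have hle : Submodule.span ℂ {v} ≤ Eu (T ω) :=
    Submodule.span_le.mpr (Set.singleton_subset_iff.mpr hvmem)
  have hfr : Module.finrank ℂ (Submodule.span ℂ {v}) = 1 :=
    finrank_span_singleton hvne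
  refine (Submodule.eq_of_le_of_finrank_eq (hspan ▸ hle) ?_).symm
  rw [← hspan] at *
  rw [hfr, hDS.finrank_u (T ω)]
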